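/- Suppose R₀ > 1 and let Q* ∈ (0,1) be the non-trivial solution of F(Q*) = 0. Then 0 < Q* < (R₀ - 1)/(γ/(γ + θ_max) + R₀ - 1), where θ_max = max_{x∈[0,A]} θ(x). In particular, this upper bound tends to 0 as R₀ → 1⁺. -/

import Mathlib

open MeasureTheory Real Set Filter

/-- `Λ(x,s) = ∫_s^x θ(t) dt`. -/
noncomputable def Lam (θ : ℝ → ℝ) (x s : ℝ) : ℝ := ∫ t in s..x, θ t

/-- `w(x;Q) = Q e^{-γx} ∫₀^x e^{γs} θ(s) e^{-Q Λ(x,s)} ds`. -/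
noncomputable def w (γ : ℝ) (θ : ℝ → ℝ) (Q x : ℝ) : ℝ :=
  Q * Real.exp (-γ * x) * ∫ s in (0:ℝ)..x, Real.exp (γ * s) * θ s * Real.exp (-Q * Lam θ x s)
/-- The kernel `k(x,s) = (p(x)/N)·θ(s)·e^{-γ(x-s)}`. -/
noncomputable def kker (γ N : ℝ) (p θ : ℝ → ℝ) (x s : ℝ) : ℝ :=
  (p x / N) * θ s * Real.exp (-γ * (x - s))

/-- The triangle `Ω = {(x,s) : 0 ≤ s ≤ x ≤ A}` (first coordinate `x`, second `s`). -/
def Tri (A : ℝ) : Set (ℝ × ℝ) := {q | 0 ≤ q.2 ∧ q.2 ≤ q.1 ∧ q.1 ≤ A}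

/-- Basic reproductive number `R₀ = ∬_Ω k(x,s) d(s,x)`. -/
noncomputable def R0 (γ N A : ℝ) (p θ : ℝ → ℝ) : ℝ :=
  ∫ q in Tri A, kker γ N p θ q.1 q.2

/-- `F(Q) = 1 - ∬_Ω k(x,s) e^{-Q Λ(x,s)} d(s,x)`. -/
noncomputable def FF (γ N A : ℝ) (p θ : ℝ → ℝ) (Q : ℝ) : ℝ :=
  1 - ∫ q in Tri A, kker γ N p θ q.1 q.2 * Real.exp (-Q * Lam θ q.1 q.2)

/-- Iteration map `T(Q) = Q·(1 - F(Q))`. -/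
noncomputable def TT (γ N A : ℝ) (p θ : ℝ → ℝ) (Q : ℝ) : ℝ :=
  Q * (1 - FF γ N A p θ Q)



lemma tri_isClosed (A : ℝ) : IsClosed (Tri A) := by
  have h1 : IsClosed {q : ℝ × ℝ | 0 ≤ q.2} := isClosed_le continuous_const continuous_snd
  have h2 : IsClosed {q : ℝ × ℝ | q.2 ≤ q.1} := isClosed_le continuous_snd continuous_fst
  have h3 : IsClosed {q : ℝ × ℝ | q.1 ≤ A} := isClosed_le continuous_fst continuous_const
  have : Tri A = {q : ℝ × ℝ | 0 ≤ q.2} ∩ ({q : ℝ × ℝ | q.2 ≤ q.1} ∩ {q : ℝ × ℝ | q.1 ≤ A}) := by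
    ext q; simp [Tri, and_assoc]
  rw [this]; exact h1.inter (h2.inter h3)

lemma tri_measurable (A : ℝ) : MeasurableSet (Tri A) := (tri_isClosed A).measurableSet

lemma tri_isCompact (A : ℝ) : IsCompact (Tri A) := by
  apply (isCompact_Icc.prod isCompact_Icc).of_isClosed_subset (tri_isClosed A)
  rintro ⟨x, s⟩ ⟨h1, h2, h3⟩
  exact ⟨⟨le_trans h1 h2, h3⟩, ⟨h1, le_trans h2 h3⟩⟩

lemma tri_le (A : ℝ) (hA : 0 < A) (F : ℝ × ℝ → ℝ) (hF : Continuous F) (B : ℝ → ℝ)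
    (hB : Continuous B)
    (h : ∀ x ∈ Set.Icc 0 A, (∫ s in (0:ℝ)..x, F (x, s)) ≤ B x) :
    (∫ q in Tri A, F q) ≤ ∫ x in (0:ℝ)..A, B x := by
  have hmeas := tri_measurable A
  have hint : IntegrableOn F (Tri A) := hF.continuousOn.integrableOn_compact (tri_isCompact A)
  have hind : Integrable (Set.indicator (Tri A) F) := (integrable_indicator_iff hmeas).2 hint
  have hindp : Integrable (Set.indicator (Tri A) F) ((volume : Measure ℝ).prod volume) := hind
  have key : (∫ q in Tri A, F q) = ∫ x : ℝ, ∫ s : ℝ, Set.indicator (Tri A) F (x, s) := by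
    rw [← integral_indicator hmeas]
    exact integral_prod _ hindp
  have hinner : ∀ x : ℝ, (∫ s : ℝ, Set.indicator (Tri A) F (x, s))
      = Set.indicator (Set.Icc 0 A) (fun x => ∫ s in (0:ℝ)..x, F (x, s)) x := by
    intro x
    by_cases hx : x ∈ Set.Icc 0 A
    · rw [Set.indicator_of_mem hx]
      have hfe : (fun s => Set.indicator (Tri A) F (x, s))
          = Set.indicator (Set.Icc 0 x) (fun s => F (x, s)) := by
        funext s
        by_cases hs : s ∈ Set.Icc 0 x
        · rw [Set.indicator_of_mem hs, Set.indicator_of_mem]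
          exact ⟨hs.1, hs.2, hx.2⟩
        · rw [Set.indicator_of_notMem hs, Set.indicator_of_notMem]
          intro hmem; exact hs ⟨hmem.1, hmem.2.1⟩
      rw [hfe, integral_indicator measurableSet_Icc, integral_Icc_eq_integral_Ioc,
        ← intervalIntegral.integral_of_le hx.1]
    · have hfe : (fun s => Set.indicator (Tri A) F (x, s)) = fun _ => (0:ℝ) := by
        funext s; rw [Set.indicator_of_notMem]
        intro hmem; exact hx ⟨le_trans hmem.1 hmem.2.1, hmem.2.2⟩
      rw [Set.indicator_of_notMem hx, hfe, integral_zero]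
  rw [key]
  calc (∫ x : ℝ, ∫ s : ℝ, Set.indicator (Tri A) F (x, s))
      ≤ ∫ x : ℝ, Set.indicator (Set.Icc 0 A) B x := by
        apply integral_mono hindp.integral_prod_left
        · exact (integrable_indicator_iff measurableSet_Icc).2 (hB.integrableOn_Icc)
        · intro x
          dsimp only
          rw [hinner x]
          by_cases hx : x ∈ Set.Icc 0 A
          · rw [Set.indicator_of_mem hx, Set.indicator_of_mem hx]; exact h x hx
          · rw [Set.indicator_of_notMem hx, Set.indicator_of_notMem hx]
    _ = ∫ x in Set.Icc 0 A, B x := integral_indicator measurableSet_Icc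
    _ = ∫ x in (0:ℝ)..A, B x := by
        rw [integral_Icc_eq_integral_Ioc, intervalIntegral.integral_of_le hA.le]

lemma exp_convex_bound {Q L : ℝ} (hQ0 : 0 ≤ Q) (hQ1 : Q ≤ 1) (hL : 0 ≤ L) :
    Real.exp (-Q * L) ≤ (1 - Q) + Q * Real.exp (-L) := by
  have h := convexOn_exp.2 (Set.mem_univ (0:ℝ)) (Set.mem_univ (-L)) (by linarith : (0:ℝ) ≤ 1 - Q)
    hQ0 (by ring)
  simp only [smul_eq_mul, mul_zero, zero_add, Real.exp_zero, mul_one] at h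
  calc Real.exp (-Q * L) = Real.exp (Q * (-L)) := by ring_nf
    _ ≤ (1 - Q) + Q * Real.exp (-L) := h

lemma inner_bound (γ θmax A : ℝ) (hγ : 0 < γ) (θ' : ℝ → ℝ) (hc : Continuous θ')
    (hpos : ∀ t, 0 < θ' t) (hle : ∀ t, θ' t ≤ θmax) {x : ℝ} (hx : x ∈ Set.Icc 0 A) :
    (∫ s in (0:ℝ)..x, θ' s * (Real.exp (-γ * (x - s)) * Real.exp (-(∫ t in s..x, θ' t))))
      ≤ (θmax / (γ + θmax)) * (1 - Real.exp (-((γ + θmax) * A))) := by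
  obtain ⟨hx0, hxA⟩ := hx
  have hθm : 0 < θmax := lt_of_lt_of_le (hpos 0) (hle 0)
  have hγθ : 0 < γ + θmax := by linarith
  set m : ℝ := θmax / (γ + θmax) with hm
  have hm0 : 0 ≤ m := le_of_lt (div_pos hθm hγθ)
  set G : ℝ → ℝ := fun u => ∫ t in (0:ℝ)..u, θ' t with hG
  have hGcont : Continuous G :=
    intervalIntegral.continuous_primitive (fun a b => hc.intervalIntegrable a b) 0
  have hGderiv : ∀ s : ℝ, HasDerivAt G (θ' s) s := fun s =>
    (hc.integral_hasStrictDerivAt 0 s).hasDerivAt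
  have hsub : ∀ s : ℝ, (∫ t in s..x, θ' t) = G x - G s := fun s =>
    (intervalIntegral.integral_interval_sub_left (hc.intervalIntegrable 0 x)
      (hc.intervalIntegrable 0 s)).symm
  set φ : ℝ → ℝ := fun s => Real.exp (-(γ * (x - s)) - (G x - G s)) with hφ
  have hφcont : Continuous φ := by
    apply Continuous.rexp
    exact ((continuous_const.mul (continuous_const.sub continuous_id)).neg).sub
      (continuous_const.sub hGcont)
  have hφpos : ∀ s, 0 < φ s := fun s => Real.exp_pos _
  have hφderiv : ∀ s : ℝ, HasDerivAt φ ((γ + θ' s) * φ s) s := by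
    intro s
    have h1 : HasDerivAt (fun u : ℝ => γ * u - γ * x + (G u - G x)) (γ + θ' s) s := by
      have ha : HasDerivAt (fun u : ℝ => γ * u) γ s := by
        simpa using (hasDerivAt_id s).const_mul γ
      exact ((ha.sub_const (γ * x)).add ((hGderiv s).sub_const (G x)))
    have heq : (fun u : ℝ => -(γ * (x - u)) - (G x - G u))
        = fun u : ℝ => γ * u - γ * x + (G u - G x) := by funext u; ring
    have h2 : HasDerivAt (fun u : ℝ => -(γ * (x - u)) - (G x - G u)) (γ + θ' s) s := by
      rw [heq]; exact h1
    have h3 := h2.exp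
    convert h3 using 1
    ring
  have hfun : (fun s => θ' s * (Real.exp (-γ * (x - s)) * Real.exp (-(∫ t in s..x, θ' t))))
      = fun s => θ' s * φ s := by
    funext s
    rw [hsub s, hφ, ← Real.exp_add]
    congr 2
    ring
  rw [hfun]
  have hint1 : IntervalIntegrable (fun s => θ' s * φ s) volume 0 x :=
    (hc.mul hφcont).intervalIntegrable 0 x
  have hint2 : IntervalIntegrable (fun s => (γ + θ' s) * φ s) volume 0 x :=
    ((continuous_const.add hc).mul hφcont).intervalIntegrable 0 x
  have hint3 : IntervalIntegrable (fun s => m * ((γ + θ' s) * φ s)) volume 0 x :=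
    (continuous_const.mul ((continuous_const.add hc).mul hφcont)).intervalIntegrable 0 x
  have hpt : ∀ s ∈ Set.Icc (0:ℝ) x, θ' s * φ s ≤ m * ((γ + θ' s) * φ s) := by
    intro s _
    have h2 : θ' s ≤ m * (γ + θ' s) := by
      rw [hm, div_mul_eq_mul_div, le_div_iff₀ hγθ]
      nlinarith [hle s, (hpos s).le]
    calc θ' s * φ s ≤ (m * (γ + θ' s)) * φ s :=
          mul_le_mul_of_nonneg_right h2 (hφpos s).le
      _ = m * ((γ + θ' s) * φ s) := by ring
  have hmono := intervalIntegral.integral_mono_on hx0 hint1 hint3 hpt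
  rw [intervalIntegral.integral_const_mul] at hmono
  have hftc : (∫ s in (0:ℝ)..x, (γ + θ' s) * φ s) = φ x - φ 0 :=
    intervalIntegral.integral_eq_sub_of_hasDerivAt (fun s _ => hφderiv s) hint2
  have hφx : φ x = 1 := by simp [hφ]
  have hφ0 : Real.exp (-((γ + θmax) * A)) ≤ φ 0 := by
    rw [hφ]
    apply Real.exp_le_exp.2
    have hGx : G x ≤ θmax * x := by
      have := intervalIntegral.integral_mono_on hx0 (hc.intervalIntegrable 0 x)
        (intervalIntegrable_const : IntervalIntegrable (fun _ => θmax) volume 0 x) (fun t _ => hle t)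
      simpa [mul_comm] using this
    have hG0 : G 0 = 0 := intervalIntegral.integral_same
    have hγx : γ * x ≤ γ * A := mul_le_mul_of_nonneg_left hxA hγ.le
    have hθx : θmax * x ≤ θmax * A := mul_le_mul_of_nonneg_left hxA hθm.le
    simp only [hG0, sub_zero]
    nlinarith
  rw [hftc, hφx] at hmono
  have hlast : m * (1 - φ 0) ≤ m * (1 - Real.exp (-((γ + θmax) * A))) :=
    mul_le_mul_of_nonneg_left (by linarith) hm0
  linarith

/-- bound on the endemic equilibrium `Q*` and its behavior as `R₀ → 1⁺`. -/

theorem endemic_equilibrium_bound (γ A N : ℝ) (hγ : 0 < γ) (hA : 0 < A) (hN : 0 < N)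
    (θ p : ℝ → ℝ)
    (hθc : ContinuousOn θ (Set.Icc 0 A)) (hθpos : ∀ x ∈ Set.Icc 0 A, 0 < θ x)
    (hpc : ContinuousOn p (Set.Icc 0 A)) (hppos : ∀ x ∈ Set.Icc 0 A, 0 < p x)
    (hnorm : (1/N) * ∫ x in (0:ℝ)..A, p x = 1)
    (θmax : ℝ) (hθmax : IsGreatest (θ '' Set.Icc 0 A) θmax)
    (hR0 : 1 < R0 γ N A p θ)
    (Qstar : ℝ) (hQmem : Qstar ∈ Set.Ioo (0:ℝ) 1) (hQroot : FF γ N A p θ Qstar = 0) :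
    (0 < Qstar ∧
      Qstar < (R0 γ N A p θ - 1) / (γ / (γ + θmax) + R0 γ N A p θ - 1)) ∧
    Filter.Tendsto (fun r : ℝ => (r - 1) / (γ / (γ + θmax) + r - 1))
      (nhdsWithin 1 (Set.Ioi 1)) (nhds 0) := by
  obtain ⟨hQ0, hQ1⟩ := hQmem
  have hA0 : (0:ℝ) ≤ A := hA.le
  set pr : ℝ → ℝ := fun t => max 0 (min t A) with hprdef
  have hprmem : ∀ t, pr t ∈ Set.Icc 0 A := fun t =>
    ⟨le_max_left _ _, max_le hA0 (min_le_right _ _)⟩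
  have hprcont : Continuous pr := continuous_const.max (continuous_id.min continuous_const)
  have hprid : ∀ t ∈ Set.Icc (0:ℝ) A, pr t = t := by
    intro t ht; simp only [hprdef]; rw [min_eq_left ht.2, max_eq_right ht.1]
  set θ' : ℝ → ℝ := fun t => θ (pr t) with hθ'def
  set p' : ℝ → ℝ := fun t => p (pr t) with hp'def
  have hθ'c : Continuous θ' := hθc.comp_continuous hprcont hprmem
  have hp'c : Continuous p' := hpc.comp_continuous hprcont hprmem
  have hθ'pos : ∀ t, 0 < θ' t := fun t => hθpos _ (hprmem t)
  have hp'pos : ∀ t, 0 < p' t := fun t => hppos _ (hprmem t)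
  have hθ'le : ∀ t, θ' t ≤ θmax := fun t => hθmax.2 ⟨pr t, hprmem t, rfl⟩
  have hθ'eq : ∀ t ∈ Set.Icc (0:ℝ) A, θ' t = θ t := by
    intro t ht; simp only [hθ'def]; rw [hprid t ht]
  have hp'eq : ∀ t ∈ Set.Icc (0:ℝ) A, p' t = p t := by
    intro t ht; simp only [hp'def]; rw [hprid t ht]
  have hθmax0 : 0 < θmax := lt_of_lt_of_le (hθ'pos 0) (hθ'le 0)
  have hγθ : 0 < γ + θmax := by linarith
  set m : ℝ := θmax / (γ + θmax) with hmdef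
  set ε : ℝ := Real.exp (-((γ + θmax) * A)) with hεdef
  have hε0 : 0 < ε := Real.exp_pos _
  have hm0 : 0 < m := div_pos hθmax0 hγθ
  have hm1 : m < 1 := (div_lt_one hγθ).2 (by linarith)
  have hmeasT := tri_measurable A
  have hcompT := tri_isCompact A
  have hL'sub : ∀ x s : ℝ, Lam θ' x s
      = (∫ t in (0:ℝ)..x, θ' t) - ∫ t in (0:ℝ)..s, θ' t := fun x s =>
    (intervalIntegral.integral_interval_sub_left (hθ'c.intervalIntegrable 0 x)
      (hθ'c.intervalIntegrable 0 s)).symm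
  have hGc : Continuous fun u : ℝ => ∫ t in (0:ℝ)..u, θ' t :=
    intervalIntegral.continuous_primitive (fun a b => hθ'c.intervalIntegrable a b) 0
  have hL'c : Continuous fun q : ℝ × ℝ => Lam θ' q.1 q.2 := by
    have heq : (fun q : ℝ × ℝ => Lam θ' q.1 q.2)
        = fun q => (∫ t in (0:ℝ)..q.1, θ' t) - ∫ t in (0:ℝ)..q.2, θ' t :=
      funext fun q => hL'sub q.1 q.2
    rw [heq]; exact (hGc.comp continuous_fst).sub (hGc.comp continuous_snd)
  have hK'c : Continuous fun q : ℝ × ℝ => kker γ N p' θ' q.1 q.2 := by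
    simp only [kker]
    exact (((hp'c.comp continuous_fst).div_const N).mul (hθ'c.comp continuous_snd)).mul
      ((continuous_const.mul (continuous_fst.sub continuous_snd)).rexp)
  have hfQ'c : Continuous fun q : ℝ × ℝ =>
      kker γ N p' θ' q.1 q.2 * Real.exp (-Qstar * Lam θ' q.1 q.2) :=
    hK'c.mul ((continuous_const.mul hL'c).rexp)
  have hfC'c : Continuous fun q : ℝ × ℝ =>
      kker γ N p' θ' q.1 q.2 * Real.exp (-Lam θ' q.1 q.2) :=
    hK'c.mul (hL'c.neg.rexp)
  have hLamEq : ∀ q ∈ Tri A, Lam θ q.1 q.2 = Lam θ' q.1 q.2 := by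
    rintro ⟨x, s⟩ ⟨h1, h2, h3⟩
    simp only [Lam]
    apply intervalIntegral.integral_congr
    intro t ht
    rw [Set.uIcc_of_le h2] at ht
    exact (hθ'eq t ⟨le_trans h1 ht.1, le_trans ht.2 h3⟩).symm
  have hkEq : ∀ q ∈ Tri A, kker γ N p θ q.1 q.2 = kker γ N p' θ' q.1 q.2 := by
    rintro ⟨x, s⟩ ⟨h1, h2, h3⟩
    simp only [kker]
    rw [hθ'eq s ⟨h1, le_trans h2 h3⟩, hp'eq x ⟨le_trans h1 h2, h3⟩]
  have hint_fQ' : IntegrableOn (fun q : ℝ × ℝ =>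
      kker γ N p' θ' q.1 q.2 * Real.exp (-Qstar * Lam θ' q.1 q.2)) (Tri A) :=
    hfQ'c.continuousOn.integrableOn_compact hcompT
  have hint_K' : IntegrableOn (fun q : ℝ × ℝ => kker γ N p' θ' q.1 q.2) (Tri A) :=
    hK'c.continuousOn.integrableOn_compact hcompT
  have hint_fC' : IntegrableOn (fun q : ℝ × ℝ =>
      kker γ N p' θ' q.1 q.2 * Real.exp (-Lam θ' q.1 q.2)) (Tri A) :=
    hfC'c.continuousOn.integrableOn_compact hcompT
  set R : ℝ := ∫ q in Tri A, kker γ N p' θ' q.1 q.2 with hRdef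
  set C : ℝ := ∫ q in Tri A, kker γ N p' θ' q.1 q.2 * Real.exp (-Lam θ' q.1 q.2) with hCdef
  have hR0eq : R0 γ N A p θ = R := by
    rw [hRdef]
    simp only [R0]
    exact setIntegral_congr_fun hmeasT (fun q hq => hkEq q hq)
  have hFFeq : (∫ q in Tri A,
      kker γ N p' θ' q.1 q.2 * Real.exp (-Qstar * Lam θ' q.1 q.2)) = 1 := by
    have h1 : (∫ q in Tri A, kker γ N p θ q.1 q.2 * Real.exp (-Qstar * Lam θ q.1 q.2)) = 1 := by
      simp only [FF] at hQroot; linarith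
    rw [← h1]
    exact (setIntegral_congr_fun hmeasT
      (fun q hq => by rw [hkEq q hq, hLamEq q hq])).symm
  have hΛnn : ∀ q ∈ Tri A, 0 ≤ Lam θ' q.1 q.2 := by
    rintro ⟨x, s⟩ ⟨h1, h2, h3⟩
    exact intervalIntegral.integral_nonneg h2 (fun u _ => (hθ'pos u).le)
  have hK'nn : ∀ q : ℝ × ℝ, 0 ≤ kker γ N p' θ' q.1 q.2 := by
    intro q; simp only [kker]
    exact mul_nonneg (mul_nonneg (div_nonneg (hp'pos _).le hN.le) (hθ'pos _).le)
      (Real.exp_pos _).le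
  have hII : (1:ℝ) ≤ (1 - Qstar) * R + Qstar * C := by
    have hmono : (∫ q in Tri A, kker γ N p' θ' q.1 q.2 * Real.exp (-Qstar * Lam θ' q.1 q.2))
        ≤ ∫ q in Tri A, ((1 - Qstar) * kker γ N p' θ' q.1 q.2
            + Qstar * (kker γ N p' θ' q.1 q.2 * Real.exp (-Lam θ' q.1 q.2))) := by
      apply setIntegral_mono_on hint_fQ'
        ((hint_K'.const_mul _).add (hint_fC'.const_mul _)) hmeasT
      intro q hq
      have h1 := exp_convex_bound hQ0.le hQ1.le (hΛnn q hq)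
      have h2 := hK'nn q
      calc kker γ N p' θ' q.1 q.2 * Real.exp (-Qstar * Lam θ' q.1 q.2)
          ≤ kker γ N p' θ' q.1 q.2 * ((1 - Qstar) + Qstar * Real.exp (-Lam θ' q.1 q.2)) :=
            mul_le_mul_of_nonneg_left h1 h2
        _ = (1 - Qstar) * kker γ N p' θ' q.1 q.2
            + Qstar * (kker γ N p' θ' q.1 q.2 * Real.exp (-Lam θ' q.1 q.2)) := by ring
    have hadd : (∫ q in Tri A, ((1 - Qstar) * kker γ N p' θ' q.1 q.2
          + Qstar * (kker γ N p' θ' q.1 q.2 * Real.exp (-Lam θ' q.1 q.2))))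
        = (1 - Qstar) * R + Qstar * C := by
      rw [integral_add (hint_K'.const_mul _) (hint_fC'.const_mul _),
        integral_const_mul, integral_const_mul]
    rw [hadd, hFFeq] at hmono
    exact hmono
  have hIII : C ≤ m * (1 - ε) := by
    have hinner : ∀ x ∈ Set.Icc (0:ℝ) A,
        (∫ s in (0:ℝ)..x, kker γ N p' θ' x s * Real.exp (-Lam θ' x s))
          ≤ (m * (1 - ε) / N) * p' x := by
      intro x hx
      have heq : (fun s => kker γ N p' θ' x s * Real.exp (-Lam θ' x s))
          = fun s => (p' x / N) * (θ' s * (Real.exp (-γ * (x - s))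
              * Real.exp (-(∫ t in s..x, θ' t)))) := by
        funext s; simp only [kker, Lam]; ring
      rw [heq, intervalIntegral.integral_const_mul]
      have hb := inner_bound γ θmax A hγ θ' hθ'c hθ'pos hθ'le hx
      have hpN : 0 ≤ p' x / N := div_nonneg (hp'pos x).le hN.le
      calc (p' x / N) * (∫ s in (0:ℝ)..x, θ' s * (Real.exp (-γ * (x - s))
              * Real.exp (-(∫ t in s..x, θ' t))))
          ≤ (p' x / N) * (m * (1 - ε)) := mul_le_mul_of_nonneg_left hb hpN
        _ = (m * (1 - ε) / N) * p' x := by ring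
    have hle := tri_le A hA
      (fun q : ℝ × ℝ => kker γ N p' θ' q.1 q.2 * Real.exp (-Lam θ' q.1 q.2)) hfC'c
      (fun x => (m * (1 - ε) / N) * p' x) (continuous_const.mul hp'c) hinner
    have hpint : (∫ x in (0:ℝ)..A, p x) = N := by
      field_simp [hN.ne'] at hnorm; linarith
    calc C ≤ ∫ x in (0:ℝ)..A, (m * (1 - ε) / N) * p' x := by rw [hCdef]; exact hle
      _ = (m * (1 - ε) / N) * ∫ x in (0:ℝ)..A, p' x :=
          intervalIntegral.integral_const_mul _ _
      _ = (m * (1 - ε) / N) * ∫ x in (0:ℝ)..A, p x := by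
          congr 1
          apply intervalIntegral.integral_congr
          intro t ht
          rw [Set.uIcc_of_le hA0] at ht
          exact hp'eq t ht
      _ = m * (1 - ε) := by rw [hpint]; field_simp
  have hR1 : 1 < R := hR0eq ▸ hR0
  have key : Qstar < (R - 1) / (γ / (γ + θmax) + R - 1) := by
    have hg : γ / (γ + θmax) = 1 - m := by rw [hmdef]; field_simp; ring
    have hD : 0 < γ / (γ + θmax) + R - 1 := by rw [hg]; linarith
    rw [lt_div_iff₀ hD, hg]
    have h1 : (1:ℝ) ≤ (1 - Qstar) * R + Qstar * (m * (1 - ε)) := by nlinarith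
    nlinarith [mul_pos (mul_pos hQ0 hm0) hε0]
  constructor
  · exact ⟨hQ0, by rw [hR0eq]; exact key⟩
  · have hgpos : γ / (γ + θmax) ≠ 0 := ne_of_gt (div_pos hγ hγθ)
    have hcont : ContinuousAt (fun r : ℝ => (r - 1) / (γ / (γ + θmax) + r - 1)) 1 := by
      apply ContinuousAt.div
      · exact (continuous_id.sub continuous_const).continuousAt
      · exact ((continuous_const.add continuous_id).sub continuous_const).continuousAt
      · simpa using hgpos
    have ht : Filter.Tendsto (fun r : ℝ => (r - 1) / (γ / (γ + θmax) + r - 1))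
        (nhdsWithin 1 (Set.Ioi 1)) (nhds ((1 - 1) / (γ / (γ + θmax) + 1 - 1))) :=
      hcont.tendsto.mono_left nhdsWithin_le_nhds
    simpa using ht
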